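/- Let H be a cyclic subgroup of (ZMod ℓ^m)⁴ generated by an element of additive order exactly ℓ^m (an 'isotropic line'). Then H is isotropic, H is contained in its orthogonal complement H^⊥, and the cardinality of H^⊥ is exactly ℓ^{3m}. -/

import Mathlib

lemma aux_isUnit (n : ℕ) [NeZero n] (a : ZMod n) (h : addOrderOf a = n) : IsUnit a := by
  have h1 : (AddSubgroup.zmultiples a) = ⊤ := by
    apply AddSubgroup.eq_top_of_card_eq
    rw [Nat.card_zmultiples, h, Nat.card_eq_fintype_card, ZMod.card]
  have : (1 : ZMod n) ∈ AddSubgroup.zmultiples a := h1 ▸ AddSubgroup.mem_top _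
  obtain ⟨k, hk⟩ := this
  exact IsUnit.of_mul_eq_one (a := a) (k : ZMod n) (by rw [mul_comm, ← zsmul_eq_mul]; exact_mod_cast hk)

/-- Let `H` be a cyclic subgroup of `(ZMod ℓ^m)⁴` generated by an element of additive order
exactly `ℓ^m` (an "isotropic line").  Then `H` is isotropic for the standard symplectic form
`ω(x,y) = x₁y₂ − x₂y₁ + x₃y₄ − x₄y₃`, `H` is contained in its orthogonal complement `H^⊥`,
and `#H^⊥ = ℓ^{3m}`. -/
theorem stmt_3 (ℓ m : ℕ) (hℓ : ℓ.Prime) (hm : 1 ≤ m)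
    (x : Fin 4 → ZMod (ℓ ^ m)) (hx : addOrderOf x = ℓ ^ m)
    (H : AddSubgroup (Fin 4 → ZMod (ℓ ^ m))) (hH : H = AddSubgroup.zmultiples x) :
    (∀ a ∈ H, ∀ b ∈ H,
        a 0 * b 1 - a 1 * b 0 + a 2 * b 3 - a 3 * b 2 = (0 : ZMod (ℓ ^ m))) ∧
    ((H : Set (Fin 4 → ZMod (ℓ ^ m))) ⊆
        {y : Fin 4 → ZMod (ℓ ^ m) | ∀ h ∈ H,
          y 0 * h 1 - y 1 * h 0 + y 2 * h 3 - y 3 * h 2 = (0 : ZMod (ℓ ^ m))}) ∧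
    Nat.card {y : Fin 4 → ZMod (ℓ ^ m) // ∀ h ∈ H,
        y 0 * h 1 - y 1 * h 0 + y 2 * h 3 - y 3 * h 2 = (0 : ZMod (ℓ ^ m))} =
      ℓ ^ (3 * m) := by
  have hn0 : ℓ ^ m ≠ 0 := pow_ne_zero _ hℓ.pos.ne'
  haveI : NeZero (ℓ ^ m) := ⟨hn0⟩
  subst hH
  have part1 : ∀ a ∈ AddSubgroup.zmultiples x, ∀ b ∈ AddSubgroup.zmultiples x,
      a 0 * b 1 - a 1 * b 0 + a 2 * b 3 - a 3 * b 2 = (0 : ZMod (ℓ ^ m)) := by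
    rintro a ⟨j, rfl⟩ b ⟨k, rfl⟩
    simp only [Pi.smul_apply, zsmul_eq_mul]
    ring
  refine ⟨part1, fun y hy h hh => part1 y hy h hh, ?_⟩
  -- some coordinate of x is a unit
  obtain ⟨i, hi⟩ : ∃ i, IsUnit (x i) := by
    by_contra hall
    push_neg at hall
    have hdvd : ∀ i, addOrderOf (x i) ∣ ℓ ^ (m - 1) := by
      intro i
      have h1 : addOrderOf (x i) ∣ ℓ ^ m := by
        apply addOrderOf_dvd_of_nsmul_eq_zero
        rw [nsmul_eq_mul, ZMod.natCast_self, zero_mul]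
      obtain ⟨k, hk, hko⟩ := (Nat.dvd_prime_pow hℓ).mp h1
      have hkm : k ≠ m := by
        intro h; exact hall i (aux_isUnit _ _ (by rw [hko, h]))
      exact hko ▸ pow_dvd_pow ℓ (by omega)
    have hx0 : (ℓ ^ (m - 1)) • x = 0 := by
      funext i
      have := (addOrderOf_dvd_iff_nsmul_eq_zero).mp (hdvd i)
      simpa using this
    have := addOrderOf_dvd_of_nsmul_eq_zero hx0
    rw [hx] at this
    have := Nat.le_of_dvd (pow_pos hℓ.pos _) this
    have := pow_lt_pow_right₀ hℓ.one_lt (show m - 1 < m by omega)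
    omega
  -- the linear functional
  let f : (Fin 4 → ZMod (ℓ ^ m)) →+ ZMod (ℓ ^ m) :=
    { toFun := fun y => y 0 * x 1 - y 1 * x 0 + y 2 * x 3 - y 3 * x 2
      map_zero' := by simp
      map_add' := by intro a b; simp only [Pi.add_apply]; ring }
  have fsmul : ∀ (c : ZMod (ℓ ^ m)) (y : Fin 4 → ZMod (ℓ ^ m)), f (c • y) = c * f y := by
    intro c y
    simp only [f, AddMonoidHom.coe_mk, ZeroHom.coe_mk, Pi.smul_apply, smul_eq_mul]
    ring
  have fsurj : Function.Surjective f := by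
    obtain ⟨y, hy⟩ : ∃ y, f y = x i := by
      fin_cases i
      · exact ⟨![0, -1, 0, 0], by simp [f]⟩
      · exact ⟨![1, 0, 0, 0], by simp [f]⟩
      · exact ⟨![0, 0, 0, -1], by simp [f]⟩
      · exact ⟨![0, 0, 1, 0], by simp [f]⟩
    obtain ⟨u, hu⟩ := hi
    intro c
    refine ⟨(c * ↑u⁻¹) • y, ?_⟩
    rw [fsmul, hy, ← hu, mul_assoc]
    simp
  -- identify the subtype with the kernel of f
  have hker : ∀ y : Fin 4 → ZMod (ℓ ^ m),
      (∀ h ∈ AddSubgroup.zmultiples x,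
        y 0 * h 1 - y 1 * h 0 + y 2 * h 3 - y 3 * h 2 = (0 : ZMod (ℓ ^ m))) ↔ y ∈ f.ker := by
    intro y
    constructor
    · intro h
      exact h x (AddSubgroup.mem_zmultiples x)
    · rintro h0 h ⟨k, rfl⟩
      have : y 0 * x 1 - y 1 * x 0 + y 2 * x 3 - y 3 * x 2 = 0 := h0
      simp only [Pi.smul_apply, zsmul_eq_mul]
      calc y 0 * ((k : ZMod (ℓ ^ m)) * x 1) - y 1 * ((k : ZMod (ℓ ^ m)) * x 0) +
            y 2 * ((k : ZMod (ℓ ^ m)) * x 3) - y 3 * ((k : ZMod (ℓ ^ m)) * x 2)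
          = (k : ZMod (ℓ ^ m)) * (y 0 * x 1 - y 1 * x 0 + y 2 * x 3 - y 3 * x 2) := by ring
        _ = 0 := by rw [this, mul_zero]
  have hcardeq : Nat.card {y : Fin 4 → ZMod (ℓ ^ m) // ∀ h ∈ AddSubgroup.zmultiples x,
      y 0 * h 1 - y 1 * h 0 + y 2 * h 3 - y 3 * h 2 = (0 : ZMod (ℓ ^ m))} = Nat.card f.ker :=
    Nat.card_congr (Equiv.subtypeEquivRight hker)
  rw [hcardeq]
  -- count the kernel
  have htot : Nat.card (Fin 4 → ZMod (ℓ ^ m)) = (ℓ ^ m) ^ 4 := by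
    simp [Nat.card_eq_fintype_card, ZMod.card]
  have hquot : Nat.card ((Fin 4 → ZMod (ℓ ^ m)) ⧸ f.ker) = ℓ ^ m := by
    rw [Nat.card_congr (QuotientAddGroup.quotientKerEquivOfSurjective f fsurj).toEquiv,
      Nat.card_eq_fintype_card, ZMod.card]
  have := AddSubgroup.card_eq_card_quotient_mul_card_addSubgroup f.ker
  rw [htot, hquot] at this
  have hn3 : (ℓ ^ m) ^ 4 = (ℓ ^ m) * (ℓ ^ m) ^ 3 := by ring
  rw [hn3] at this
  have : Nat.card f.ker = (ℓ ^ m) ^ 3 :=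
    Nat.eq_of_mul_eq_mul_left (Nat.pos_of_ne_zero hn0) this.symm
  rw [this, ← pow_mul, mul_comm]
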